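/- If G is a finitely generated group, then RF_na(G) ≅ RF(G)/Z(RF(G)); in particular, RF_na(G) has trivial center. -/

import Mathlib

open FreeGroup

namespace Stmt17Aux

variable {α β : Type*}

lemma list_const {x : α} : ∀ {L : List α}, x :: L = L ++ [x] → ∀ y ∈ L, y = x := by
  intro L
  induction L with
  | nil => simp
  | cons a T ih =>
    intro h y hy
    rw [List.cons_append] at h
    obtain ⟨h1, h2⟩ := List.cons.inj h
    subst h1
    rcases List.mem_cons.mp hy with hy | hy
    · exact hy
    · exact ih h2 y hy

lemma invRev_append (L M : List (α × Bool)) :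
    invRev (L ++ M) = invRev M ++ invRev L := by
  simp [invRev]

/-- Word-level key lemma. -/
lemma word_const [DecidableEq β] {L : List (β × Bool)} (hred : reduce L = L) (b : β)
    (hredeq : reduce ((b, true) :: L) = reduce (L ++ [(b, true)])) :
    ∀ p ∈ L, p.1 = b := by
  rcases hL : L with _ | ⟨⟨a, s⟩, T⟩
  · simp
  rcases List.eq_nil_or_concat L with hnil | ⟨I, ⟨c, t⟩, hlast⟩
  · rw [hL] at hnil; simp at hnil
  rw [List.concat_eq_append] at hlast
  subst hL
  -- LHS value
  have hA : reduce ((b, true) :: (a, s) :: T) =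
      if b = a ∧ s = false then T else (b, true) :: (a, s) :: T := by
    rw [reduce.cons, hred]
    by_cases hba : b = a <;> cases s <;> simp [hba]
  -- RHS value
  have hinvL : invRev ((a, s) :: T) = (c, !t) :: invRev I := by
    rw [hlast, invRev_append]; simp [invRev]
  have hredinv : reduce (invRev ((a, s) :: T)) = invRev ((a, s) :: T) := by
    rw [reduce_invRev, hred]
  have hB1 : reduce (((a, s) :: T) ++ [(b, true)]) =
      invRev (reduce ((b, false) :: invRev ((a, s) :: T))) := by
    conv_lhs => rw [← invRev_invRev (L₁ := ((a, s) :: T) ++ [(b, true)])]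
    rw [reduce_invRev]
    congr 2
    rw [invRev_append]; simp [invRev]
  have hback : (b, false) :: invRev ((a, s) :: T) =
      invRev (((a, s) :: T) ++ [(b, true)]) := by
    rw [invRev_append]; simp [invRev]
  have hstep : reduce ((b, false) :: invRev ((a, s) :: T)) =
      if b = c ∧ t = false then invRev I else (b, false) :: invRev ((a, s) :: T) := by
    rw [reduce.cons, hredinv, hinvL]
    by_cases hbc : b = c <;> cases t <;> simp [hbc]
  have hB : reduce (((a, s) :: T) ++ [(b, true)]) =
      if b = c ∧ t = false then I else ((a, s) :: T) ++ [(b, true)] := by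
    rw [hB1, hstep]
    split_ifs
    · rw [invRev_invRev]
    · rw [hback, invRev_invRev]
  rw [hA, hB] at hredeq
  intro p hp
  split_ifs at hredeq with h1 h2 h2
  · -- both cancel : T = I, word constant (b, false)
    obtain ⟨rfl, rfl⟩ := h1
    obtain ⟨hbc, ht⟩ := h2
    subst hbc; subst ht
    subst hredeq
    have hconst := list_const hlast
    rcases List.mem_cons.mp hp with hp | hp
    · rw [hp]
    · rw [hconst p hp]
  · exfalso
    have := congrArg List.length hredeq
    simp at this
    omega
  · exfalso
    have l1 := congrArg List.length hredeq
    have l2 := congrArg List.length hlast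
    simp at l1 l2
    omega
  · have hconst := list_const hredeq
    rw [hconst p hp]

/-- If `of b` commutes with `w`, every letter of the reduced word of `w` is `b`. -/
lemma letters_eq [DecidableEq β] (w : FreeGroup β) (b : β)
    (hc : FreeGroup.of b * w = w * FreeGroup.of b) :
    ∀ p ∈ w.toWord, p.1 = b := by
  have hred : reduce w.toWord = w.toWord := reduce_toWord w
  have hofb : (FreeGroup.of b : FreeGroup β) = FreeGroup.mk [(b, true)] := rfl
  have hw : w = FreeGroup.mk w.toWord := (mk_toWord).symm
  have hmk : FreeGroup.mk ((b, true) :: w.toWord) =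
      FreeGroup.mk (w.toWord ++ [(b, true)]) := by
    conv_lhs => rw [show ((b, true) :: w.toWord) = [(b, true)] ++ w.toWord from rfl]
    rw [← mul_mk, ← mul_mk, ← hofb, ← hw, hc]
  exact word_const hred b (reduce.sound hmk)

lemma comm_of_subsingleton [Subsingleton β] (x y : FreeGroup β) : Commute x y := by
  induction x using FreeGroup.induction_on with
  | C1 => exact Commute.one_left y
  | of a =>
    induction y using FreeGroup.induction_on with
    | C1 => exact Commute.one_right _
    | of b => rw [Subsingleton.elim a b]
    | inv_of b h => exact h.inv_right
    | mul u v hu hv => exact hu.mul_right hv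
  | inv_of a h => exact h.inv_left
  | mul u v hu hv => exact hu.mul_left hv

/-- A free group with a nontrivial central element is abelian. -/
lemma free_center {H : Type*} [Group H] [IsFreeGroup H] {z : H} (hz : z ≠ 1)
    (hc : ∀ h, Commute z h) (x y : H) : Commute x y := by
  classical
  let e := IsFreeGroup.toFreeGroup H
  have hinj : Function.Injective e := e.injective
  have key : ∀ u v : H, Commute (e u) (e v) → Commute u v := by
    intro u v h
    have : e (u * v) = e (v * u) := by
      rw [e.map_mul, e.map_mul]; exact h
    exact hinj this
  apply key
  have hz' : e z ≠ 1 := by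
    simp only [ne_eq, map_eq_one_iff e hinj]
    exact hz
  have hcz : ∀ w, Commute (e z) w := by
    intro w
    have h := hc (e.symm w)
    have : e (z * e.symm w) = e (e.symm w * z) := by rw [h]
    rw [e.map_mul, e.map_mul, MulEquiv.apply_symm_apply] at this
    exact this
  by_cases hs : Subsingleton (IsFreeGroup.Generators H)
  · exact comm_of_subsingleton _ _
  · exfalso
    have : Nontrivial (IsFreeGroup.Generators H) := not_subsingleton_iff_nontrivial.mp hs
    obtain ⟨b₁, b₂, hne⟩ := this
    have h1 := letters_eq (e z) b₁ ((hcz (FreeGroup.of b₁)).symm)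
    have h2 := letters_eq (e z) b₂ ((hcz (FreeGroup.of b₂)).symm)
    have hnil : (e z).toWord ≠ [] := fun h => hz' (toWord_eq_nil_iff.mp h)
    obtain ⟨p, hp⟩ := List.exists_mem_of_ne_nil _ hnil
    exact hne ((h1 p hp).symm.trans (h2 p hp))

/-- Commutative transitivity in a free group. -/
lemma comm_trans {x y z : FreeGroup (Fin 2)} (hx : x ≠ 1)
    (hxy : Commute x y) (hxz : Commute x z) : Commute y z := by
  let H := Subgroup.centralizer ({x} : Set (FreeGroup (Fin 2)))
  have hxH : x ∈ H := Subgroup.mem_centralizer_iff.mpr (by rintro g rfl; rfl)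
  have hyH : y ∈ H := Subgroup.mem_centralizer_iff.mpr (by rintro g rfl; exact hxy)
  have hzH : z ∈ H := Subgroup.mem_centralizer_iff.mpr (by rintro g rfl; exact hxz)
  have hz1 : (⟨x, hxH⟩ : H) ≠ 1 := by
    simp only [ne_eq, Subtype.ext_iff]; exact hx
  have hcent : ∀ h : H, Commute (⟨x, hxH⟩ : H) h := by
    rintro ⟨h, hh⟩
    have := Subgroup.mem_centralizer_iff.mp hh x rfl
    exact Subtype.ext this
  have := free_center hz1 hcent (⟨y, hyH⟩ : H) (⟨z, hzH⟩ : H)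
  exact congrArg Subtype.val this

lemma vanish {G : Type*} [Group G] {f : G →* FreeGroup (Fin 2)}
    (hf : ¬ ∀ x ∈ f.range, ∀ y ∈ f.range, x * y = y * x)
    {g : G} (hg : ∀ h : G, f g * f h = f h * f g) : f g = 1 := by
  by_contra hne
  push_neg at hf
  obtain ⟨x, ⟨a, rfl⟩, y, ⟨b, rfl⟩, hxy⟩ := hf
  exact hxy (comm_trans hne (hg a) (hg b))

lemma comm_of_ker {G : Type*} [Group G] {H : Type*} [Group H] (f : G →* H) {g h : G}
    (hker : f ((h * g)⁻¹ * (g * h)) = 1) : f g * f h = f h * f g := by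
  have h2 : (f (h * g))⁻¹ * f (g * h) = 1 := by
    rw [← _root_.map_inv, ← _root_.map_mul]; exact hker
  have h3 : f (h * g) = f (g * h) := inv_mul_eq_one.mp h2
  rw [_root_.map_mul, _root_.map_mul] at h3
  exact h3.symm

end Stmt17Aux

/-- For a finitely generated group `G`, `RF_na(G) ≅ RF(G)/Z(RF(G))`; in
particular `RF_na(G)` has trivial center. Here `RF(G) = G ⧸ K` with `K` the
intersection of the kernels of all homomorphisms to a rank-two free group,
and `RF_na(G) = G ⧸ Kna` with `Kna` the intersection of the kernels of those
homomorphisms with nonabelian image. -/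
theorem stmt_17 {G : Type*} [Group G] [Group.FG G] (K Kna : Subgroup G)
    [K.Normal] [Kna.Normal]
    (hK : K = ⨅ f : G →* FreeGroup (Fin 2), f.ker)
    (hKna : Kna = ⨅ f : {f : G →* FreeGroup (Fin 2) //
        ¬ ∀ x ∈ f.range, ∀ y ∈ f.range, x * y = y * x},
      (f : G →* FreeGroup (Fin 2)).ker) :
    Nonempty ((G ⧸ Kna) ≃* (G ⧸ K) ⧸ Subgroup.center (G ⧸ K)) ∧
      Subgroup.center (G ⧸ Kna) = ⊥ := by
  have hKle : ∀ f : G →* FreeGroup (Fin 2), K ≤ f.ker := fun f => hK ▸ iInf_le _ f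
  have hKnale : ∀ f : {f : G →* FreeGroup (Fin 2) //
      ¬ ∀ x ∈ f.range, ∀ y ∈ f.range, x * y = y * x},
      Kna ≤ (f : G →* FreeGroup (Fin 2)).ker := fun f => hKna ▸ iInf_le _ f
  have memKna : ∀ {g : G},
      (∀ f : G →* FreeGroup (Fin 2),
        (¬ ∀ x ∈ f.range, ∀ y ∈ f.range, x * y = y * x) → f g = 1) → g ∈ Kna := by
    intro g h
    rw [hKna, Subgroup.mem_iInf]
    rintro ⟨f, hf⟩
    exact h f hf
  -- key1 : Kna is the preimage of the center
  have key1 : Kna = (Subgroup.center (G ⧸ K)).comap (QuotientGroup.mk' K) := by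
    ext g
    constructor
    · intro hg
      simp only [Subgroup.mem_comap, Subgroup.mem_center_iff]
      intro q
      induction q using QuotientGroup.induction_on with
      | H h =>
        show ((h * g : G) : G ⧸ K) = ((g * h : G) : G ⧸ K)
        rw [QuotientGroup.eq]
        rw [hK, Subgroup.mem_iInf]
        intro f
        rw [MonoidHom.mem_ker]
        by_cases hab : ∀ x ∈ f.range, ∀ y ∈ f.range, x * y = y * x
        · have hcomm : f h * f g = f g * f h :=
            hab (f h) ⟨h, rfl⟩ (f g) ⟨g, rfl⟩
          rw [_root_.map_mul, _root_.map_inv, _root_.map_mul, _root_.map_mul,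
            hcomm, inv_mul_cancel]
        · have hg1 : f g = 1 := hKnale ⟨f, hab⟩ hg
          simp [_root_.map_mul, _root_.map_inv, hg1]
    · intro hg
      simp only [Subgroup.mem_comap, Subgroup.mem_center_iff] at hg
      apply memKna
      intro f hf
      apply Stmt17Aux.vanish hf
      intro h
      have := hg ((h : G) : G ⧸ K)
      rw [show ((h : G) : G ⧸ K) * (QuotientGroup.mk' K) g
          = ((h * g : G) : G ⧸ K) from rfl,
        show (QuotientGroup.mk' K) g * ((h : G) : G ⧸ K)
          = ((g * h : G) : G ⧸ K) from rfl, QuotientGroup.eq] at this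
      have hker := hKle f this
      rw [MonoidHom.mem_ker] at hker
      exact Stmt17Aux.comm_of_ker f hker
  constructor
  · -- the isomorphism
    set φ : G →* (G ⧸ K) ⧸ Subgroup.center (G ⧸ K) :=
      (QuotientGroup.mk' (Subgroup.center (G ⧸ K))).comp (QuotientGroup.mk' K)
    have hsurj : Function.Surjective φ :=
      (QuotientGroup.mk'_surjective _).comp (QuotientGroup.mk'_surjective _)
    have hker : Kna = φ.ker := by
      rw [key1]
      ext g
      simp [φ, MonoidHom.mem_ker, Subgroup.mem_comap,
        QuotientGroup.eq_one_iff]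
    exact ⟨(QuotientGroup.quotientMulEquivOfEq hker).trans
      (QuotientGroup.quotientKerEquivOfSurjective φ hsurj)⟩
  · -- trivial center
    rw [eq_bot_iff]
    intro q hq
    induction q using QuotientGroup.induction_on with
    | H g =>
      rw [Subgroup.mem_center_iff] at hq
      rw [Subgroup.mem_bot]
      rw [QuotientGroup.eq_one_iff]
      apply memKna
      intro f hf
      apply Stmt17Aux.vanish hf
      intro h
      have := hq ((h : G) : G ⧸ Kna)
      rw [show ((h : G) : G ⧸ Kna) * ((g : G) : G ⧸ Kna)
          = ((h * g : G) : G ⧸ Kna) from rfl,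
        show ((g : G) : G ⧸ Kna) * ((h : G) : G ⧸ Kna)
          = ((g * h : G) : G ⧸ Kna) from rfl, QuotientGroup.eq] at this
      have hker := hKnale ⟨f, hf⟩ this
      rw [MonoidHom.mem_ker] at hker
      exact Stmt17Aux.comm_of_ker f hker
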